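/- Let n ≥ 1, N = 2^n, 0 ≤ ε ≤ 1, and let E be an N×N unitary matrix over ℂ with |Tr(E)| ≥ N(1 − ε²). Let Q = ∑_{P ∈ 𝒫_n} q_P·P be any N×N unitary matrix over ℂ with Pauli coefficients q_P = Tr(Q·P)/N. Then for each P' ∈ 𝒫_n: (1 − ε²)·|q_{P'}| − (∑_{P ∈ 𝒫_n, P ≠ P'} |q_P|)·sqrt(2ε² − ε⁴) ≤ |Tr(E·Q·P')|/N ≤ |q_{P'}| + (∑_{P ∈ 𝒫_n, P ≠ P'} |q_P|)·sqrt(2ε² − ε⁴). -/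

import Mathlib

open Matrix

/-- The four single-qubit Pauli matrices: I, X, Y, Z. -/
noncomputable def pauliOne : Fin 4 → Matrix (Fin 2) (Fin 2) ℂ
  | 0 => 1
  | 1 => !![0, 1; 1, 0]
  | 2 => !![0, -Complex.I; Complex.I, 0]
  | 3 => !![1, 0; 0, -1]

/-- The `n`-qubit Pauli matrix indexed by `s : Fin n → Fin 4`: the `n`-fold
Kronecker (tensor) product of single-qubit Paulis, realized as a matrix on
the index type `Fin n → Fin 2` (of cardinality `2 ^ n`). -/
noncomputable def PauliTensor (n : ℕ) (s : Fin n → Fin 4) :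
    Matrix (Fin n → Fin 2) (Fin n → Fin 2) ℂ :=
  Matrix.of fun x y => ∏ i, pauliOne (s i) (x i) (y i)

lemma pauliOne_conj (k : Fin 4) (a b : Fin 2) :
    (starRingEnd ℂ) (pauliOne k a b) = pauliOne k b a := by
  fin_cases k <;> fin_cases a <;> fin_cases b <;>
    simp [pauliOne, Matrix.one_apply]

lemma pauliOne_mul_self (k : Fin 4) : pauliOne k * pauliOne k = 1 := by
  fin_cases k <;> ext a b <;> fin_cases a <;> fin_cases b <;>
    simp [pauliOne, Matrix.mul_apply, Fin.sum_univ_two, Matrix.one_apply] <;>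
    norm_num [Complex.ext_iff]

lemma pauliOne_trace_mul (k l : Fin 4) :
    (pauliOne k * pauliOne l).trace = if k = l then 2 else 0 := by
  fin_cases k <;> fin_cases l <;>
    simp [pauliOne, Matrix.trace, Matrix.mul_apply, Matrix.diag, Fin.sum_univ_two,
      Matrix.one_apply] <;> norm_num [Complex.ext_iff]

lemma pauliOne_complete (a b c d : Fin 2) :
    ∑ k : Fin 4, pauliOne k a b * pauliOne k c d
      = if a = d ∧ b = c then 2 else 0 := by
  fin_cases a <;> fin_cases b <;> fin_cases c <;> fin_cases d <;>
    simp [pauliOne, Fin.sum_univ_four, Matrix.one_apply] <;>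
    norm_num [Complex.ext_iff]

lemma PauliTensor_mul (n : ℕ) (s t : Fin n → Fin 4) :
    PauliTensor n s * PauliTensor n t
      = Matrix.of fun x y => ∏ i, (pauliOne (s i) * pauliOne (t i)) (x i) (y i) := by
  ext x y
  simp only [PauliTensor, Matrix.mul_apply, Matrix.of_apply]
  rw [Fintype.prod_sum fun i a => pauliOne (s i) (x i) a * pauliOne (t i) a (y i)]
  simp [Finset.prod_mul_distrib]

lemma PauliTensor_sq (n : ℕ) (s : Fin n → Fin 4) :
    PauliTensor n s * PauliTensor n s = 1 := by
  rw [PauliTensor_mul]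
  ext x y
  simp only [Matrix.of_apply, pauliOne_mul_self, Matrix.one_apply]
  by_cases h : x = y
  · subst h; simp
  · obtain ⟨i, hi⟩ := Function.ne_iff.mp h
    rw [if_neg h]
    exact Finset.prod_eq_zero (Finset.mem_univ i) (by simp [Matrix.one_apply, hi])

lemma PauliTensor_conjTranspose (n : ℕ) (s : Fin n → Fin 4) :
    (PauliTensor n s)ᴴ = PauliTensor n s := by
  ext x y
  simp [PauliTensor, Matrix.conjTranspose_apply, map_prod, pauliOne_conj]

lemma trace_of_prod (n : ℕ) (M : Fin n → Matrix (Fin 2) (Fin 2) ℂ) :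
    (Matrix.of fun x y : Fin n → Fin 2 => ∏ i, M i (x i) (y i)).trace
      = ∏ i, (M i).trace := by
  simp only [Matrix.trace, Matrix.diag, Matrix.of_apply]
  exact (Fintype.prod_sum fun i a => M i a a).symm

lemma PauliTensor_trace_mul (n : ℕ) (s t : Fin n → Fin 4) :
    (PauliTensor n s * PauliTensor n t).trace = if s = t then (2 : ℂ) ^ n else 0 := by
  rw [PauliTensor_mul, trace_of_prod]
  simp only [pauliOne_trace_mul]
  by_cases h : s = t
  · subst h; simp
  · obtain ⟨i, hi⟩ := Function.ne_iff.mp h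
    rw [if_neg h]
    exact Finset.prod_eq_zero (Finset.mem_univ i) (by simp [hi])

lemma Pauli_complete (n : ℕ) (A : Matrix (Fin n → Fin 2) (Fin n → Fin 2) ℂ) :
    ∑ s : Fin n → Fin 4, (A * PauliTensor n s).trace • PauliTensor n s
      = ((2 : ℂ) ^ n) • A := by
  ext x y
  have key : ∀ u v : Fin n → Fin 2,
      (∑ s : Fin n → Fin 4,
        (∏ i, pauliOne (s i) (v i) (u i)) * ∏ i, pauliOne (s i) (x i) (y i))
        = if u = x ∧ v = y then (2 : ℂ) ^ n else 0 := by
    intro u v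
    have h1 : ∀ s : Fin n → Fin 4,
        (∏ i, pauliOne (s i) (v i) (u i)) * ∏ i, pauliOne (s i) (x i) (y i)
        = ∏ i, pauliOne (s i) (v i) (u i) * pauliOne (s i) (x i) (y i) := by
      intro s; rw [Finset.prod_mul_distrib]
    simp_rw [h1]
    rw [← Fintype.prod_sum fun (i : Fin n) (k : Fin 4) =>
      pauliOne k (v i) (u i) * pauliOne k (x i) (y i)]
    simp_rw [pauliOne_complete]
    by_cases h : u = x ∧ v = y
    · obtain ⟨h2, h3⟩ := h
      subst h2; subst h3
      simp
    · rw [if_neg h]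
      rw [not_and_or] at h
      rcases h with h | h
      · obtain ⟨i, hi⟩ := Function.ne_iff.mp h
        exact Finset.prod_eq_zero (Finset.mem_univ i)
          (by rw [if_neg]; rintro ⟨h2, h3⟩; exact hi h3)
      · obtain ⟨i, hi⟩ := Function.ne_iff.mp h
        exact Finset.prod_eq_zero (Finset.mem_univ i)
          (by rw [if_neg]; rintro ⟨h2, h3⟩; exact hi h2)
  have expand : ∀ s : Fin n → Fin 4, (A * PauliTensor n s).trace
      = ∑ u : Fin n → Fin 2, ∑ v : Fin n → Fin 2, A u v * PauliTensor n s v u := by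
    intro s
    simp only [Matrix.trace, Matrix.diag, Matrix.mul_apply]
  simp only [Matrix.sum_apply, Matrix.smul_apply, smul_eq_mul]
  calc (∑ s : Fin n → Fin 4, (A * PauliTensor n s).trace * PauliTensor n s x y)
      = ∑ s : Fin n → Fin 4, ∑ u : Fin n → Fin 2, ∑ v : Fin n → Fin 2,
          A u v * (PauliTensor n s v u * PauliTensor n s x y) := by
        simp_rw [expand, Finset.sum_mul, mul_assoc]
    _ = ∑ u : Fin n → Fin 2, ∑ v : Fin n → Fin 2, ∑ s : Fin n → Fin 4,
          A u v * (PauliTensor n s v u * PauliTensor n s x y) := by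
        rw [Finset.sum_comm]
        exact Finset.sum_congr rfl fun u _ => Finset.sum_comm
    _ = ∑ u : Fin n → Fin 2, ∑ v : Fin n → Fin 2,
          A u v * (if u = x ∧ v = y then (2 : ℂ) ^ n else 0) := by
        refine Finset.sum_congr rfl fun u _ => Finset.sum_congr rfl fun v _ => ?_
        rw [← Finset.mul_sum]
        congr 1
        simpa only [PauliTensor, Matrix.of_apply] using key u v
    _ = ((2 : ℂ) ^ n) * A x y := by
        simp [ite_and, mul_ite, Finset.sum_ite_eq, mul_comm]
  

lemma trace_self_re_nonneg {n : ℕ} (A : Matrix (Fin n → Fin 2) (Fin n → Fin 2) ℂ) :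
    0 ≤ ((Aᴴ * A).trace).re := by
  have h : (Aᴴ * A).trace = ((∑ j, ∑ i, Complex.normSq (A i j) : ℝ) : ℂ) := by
    push_cast
    simp only [Matrix.trace, Matrix.diag, Matrix.mul_apply, Matrix.conjTranspose_apply]
    refine Finset.sum_congr rfl fun j _ => Finset.sum_congr rfl fun i _ => ?_
    rw [Complex.normSq_eq_conj_mul_self]
    rfl
  rw [h, Complex.ofReal_re]
  exact Finset.sum_nonneg fun j _ => Finset.sum_nonneg fun i _ => Complex.normSq_nonneg _

lemma card_pi (n : ℕ) : Fintype.card (Fin n → Fin 2) = 2 ^ n := by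
  simp [Fintype.card_fun]

lemma bessel (n : ℕ) (E : Matrix (Fin n → Fin 2) (Fin n → Fin 2) ℂ)
    (hEunit : Eᴴ * E = 1) (s' : Fin n → Fin 4)
    (d : (Fin n → Fin 4) → ℂ)
    (hd : ∀ s, (2 : ℂ) ^ n * d s = (E * PauliTensor n s * PauliTensor n s').trace) :
    ∑ s : Fin n → Fin 4, ‖d s‖ ^ 2 ≤ 1 := by
  set V : (Fin n → Fin 4) → Matrix (Fin n → Fin 2) (Fin n → Fin 2) ℂ :=
    fun s => PauliTensor n s' * PauliTensor n s with hV
  have horth : ∀ s t, ((V s)ᴴ * V t).trace = if s = t then (2 : ℂ) ^ n else 0 := by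
    intro s t
    have h1 : (V s)ᴴ * V t = PauliTensor n s * PauliTensor n t := by
      simp only [hV, Matrix.conjTranspose_mul, PauliTensor_conjTranspose]
      rw [Matrix.mul_assoc, ← Matrix.mul_assoc (PauliTensor n s'), PauliTensor_sq,
        Matrix.one_mul]
    rw [h1, PauliTensor_trace_mul]
  have hVE : ∀ s, ((V s)ᴴ * E).trace = (2 : ℂ) ^ n * d s := by
    intro s
    have h1 : (V s)ᴴ = PauliTensor n s * PauliTensor n s' := by
      simp only [hV, Matrix.conjTranspose_mul, PauliTensor_conjTranspose]
    rw [h1, hd s, Matrix.trace_mul_comm, Matrix.mul_assoc]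
  set S : Matrix (Fin n → Fin 2) (Fin n → Fin 2) ℂ := ∑ s, d s • V s with hS
  have hT2 : (Eᴴ * S).trace = ∑ s, d s * ((2 : ℂ) ^ n * (starRingEnd ℂ) (d s)) := by
    rw [hS, Matrix.mul_sum, Matrix.trace_sum]
    refine Finset.sum_congr rfl fun s _ => ?_
    rw [Matrix.mul_smul, Matrix.trace_smul, smul_eq_mul]
    congr 1
    have h2 : Eᴴ * V s = ((V s)ᴴ * E)ᴴ := by
      simp [Matrix.conjTranspose_mul]
    rw [h2, Matrix.trace_conjTranspose, hVE s]
    simp [_root_.map_mul]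
  have hT3 : (Sᴴ * E).trace = ∑ s, (starRingEnd ℂ) (d s) * ((2 : ℂ) ^ n * d s) := by
    rw [hS, Matrix.conjTranspose_sum]
    simp only [Matrix.conjTranspose_smul]
    rw [Matrix.sum_mul, Matrix.trace_sum]
    refine Finset.sum_congr rfl fun s _ => ?_
    rw [Matrix.smul_mul, Matrix.trace_smul, smul_eq_mul, hVE s]
    rfl
  have hT4 : (Sᴴ * S).trace = ∑ s, (starRingEnd ℂ) (d s) * d s * (2 : ℂ) ^ n := by
    rw [hS, Matrix.conjTranspose_sum]
    simp only [Matrix.conjTranspose_smul]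
    rw [Matrix.sum_mul, Matrix.trace_sum]
    refine Finset.sum_congr rfl fun s _ => ?_
    rw [Matrix.smul_mul, Matrix.mul_sum, Matrix.trace_smul]
    rw [Matrix.trace_sum]
    simp only [Matrix.mul_smul, Matrix.trace_smul, smul_eq_mul]
    rw [Finset.mul_sum]
    simp_rw [horth, mul_ite, mul_zero, Finset.sum_ite_eq, Finset.mem_univ, if_true]
    rw [Complex.star_def]
    ring
  have hT1 : (Eᴴ * E).trace = (2 : ℂ) ^ n := by
    rw [hEunit, Matrix.trace_one, card_pi]
    push_cast
    ring
  have hexp : ((E - S)ᴴ * (E - S)).trace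
      = (2 : ℂ) ^ n - (2 : ℂ) ^ n * ∑ s, (starRingEnd ℂ) (d s) * d s := by
    rw [Matrix.conjTranspose_sub, Matrix.sub_mul, Matrix.mul_sub, Matrix.mul_sub,
      Matrix.trace_sub, Matrix.trace_sub, Matrix.trace_sub, hT1, hT2, hT3, hT4]
    rw [Finset.mul_sum]
    rw [show (∑ s, d s * ((2:ℂ)^n * (starRingEnd ℂ) (d s)))
        = ∑ s, (2:ℂ)^n * ((starRingEnd ℂ) (d s) * d s) from
      Finset.sum_congr rfl fun s _ => by ring]
    rw [show (∑ s, (starRingEnd ℂ) (d s) * ((2:ℂ)^n * d s))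
        = ∑ s, (2:ℂ)^n * ((starRingEnd ℂ) (d s) * d s) from
      Finset.sum_congr rfl fun s _ => by ring]
    rw [show (∑ s, (starRingEnd ℂ) (d s) * d s * (2:ℂ)^n)
        = ∑ s, (2:ℂ)^n * ((starRingEnd ℂ) (d s) * d s) from
      Finset.sum_congr rfl fun s _ => by ring]
    ring
  have hsum_cast : (∑ s : Fin n → Fin 4, (starRingEnd ℂ) (d s) * d s)
      = ((∑ s : Fin n → Fin 4, ‖d s‖ ^ 2 : ℝ) : ℂ) := by
    rw [Complex.ofReal_sum]
    refine Finset.sum_congr rfl fun s _ => ?_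
    rw [show ((‖d s‖ ^ 2 : ℝ) : ℂ) = ((Complex.normSq (d s) : ℝ) : ℂ) by
      rw [Complex.sq_norm]]
    rw [Complex.normSq_eq_conj_mul_self]
  have hre := trace_self_re_nonneg (E - S)
  rw [hexp, hsum_cast] at hre
  have h2n : (0 : ℝ) < 2 ^ n := by positivity
  rw [show ((2:ℂ)^n - (2:ℂ)^n * ((∑ s : Fin n → Fin 4, ‖d s‖ ^ 2 : ℝ) : ℂ))
      = (((2:ℝ)^n - (2:ℝ)^n * (∑ s : Fin n → Fin 4, ‖d s‖ ^ 2) : ℝ) : ℂ) by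
    push_cast; ring] at hre
  rw [Complex.ofReal_re] at hre
  nlinarith [hre]

set_option maxHeartbeats 2000000

/-- Theorem: for a unitary `E` with `|Tr E| ≥ N (1 - ε²)` and any unitary `Q`
with Pauli coefficients `q_P = Tr (Q * P) / N`, the quantity `|Tr (E * Q * P')| / N`
is within `(∑_{P ≠ P'} |q_P|) * sqrt (2ε² - ε⁴)` of `|q_{P'}|` (up to the
factor `1 - ε²` in the lower bound). -/
theorem trace_bound_general (n : ℕ) (hn : 1 ≤ n)
    (ε : ℝ) (hε0 : 0 ≤ ε) (hε1 : ε ≤ 1)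
    (E : Matrix (Fin n → Fin 2) (Fin n → Fin 2) ℂ)
    (hE : E ∈ Matrix.unitaryGroup (Fin n → Fin 2) ℂ)
    (hEtr : (2 : ℝ) ^ n * (1 - ε ^ 2) ≤ ‖E.trace‖)
    (Q : Matrix (Fin n → Fin 2) (Fin n → Fin 2) ℂ)
    (hQ : Q ∈ Matrix.unitaryGroup (Fin n → Fin 2) ℂ)
    (q : (Fin n → Fin 4) → ℂ)
    (hq : ∀ s : Fin n → Fin 4, q s = (Q * PauliTensor n s).trace / ((2 : ℂ) ^ n))
    (s' : Fin n → Fin 4) :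
    (1 - ε ^ 2) * ‖q s'‖
        - (∑ s ∈ Finset.univ.filter (fun s => s ≠ s'), ‖q s‖)
            * Real.sqrt (2 * ε ^ 2 - ε ^ 4)
        ≤ ‖(E * Q * PauliTensor n s').trace‖ / (2 : ℝ) ^ n ∧
      ‖(E * Q * PauliTensor n s').trace‖ / (2 : ℝ) ^ n
        ≤ ‖q s'‖
          + (∑ s ∈ Finset.univ.filter (fun s => s ≠ s'), ‖q s‖)
              * Real.sqrt (2 * ε ^ 2 - ε ^ 4) := by
  have h2c : ((2 : ℂ) ^ n) ≠ 0 := pow_ne_zero _ two_ne_zero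
  have h2r : (0 : ℝ) < (2 : ℝ) ^ n := by positivity
  have hEunit : Eᴴ * E = 1 := by
    have h := Matrix.mem_unitaryGroup_iff'.mp hE
    simpa [Matrix.star_eq_conjTranspose] using h
  set d : (Fin n → Fin 4) → ℂ :=
    fun s => (E * PauliTensor n s * PauliTensor n s').trace / (2 : ℂ) ^ n with hdD
  have hd : ∀ s, (2 : ℂ) ^ n * d s = (E * PauliTensor n s * PauliTensor n s').trace := by
    intro s
    simp only [hdD]
    field_simp
  have hB := bessel n E hEunit s' d hd
  have habs2n : ‖(2 : ℂ) ^ n‖ = (2 : ℝ) ^ n := by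
    simp [map_pow]
  have hds' : d s' = E.trace / (2 : ℂ) ^ n := by
    simp only [hdD]
    rw [Matrix.mul_assoc, PauliTensor_sq, Matrix.mul_one]
  have habs_ds'_lb : 1 - ε ^ 2 ≤ ‖d s'‖ := by
    rw [hds', norm_div, habs2n, le_div_iff₀ h2r]
    linarith [hEtr]
  have hds'_le : ‖d s'‖ ≤ 1 := by
    have h1 : ‖d s'‖ ^ 2 ≤ 1 :=
      le_trans (Finset.single_le_sum (f := fun s => ‖d s‖ ^ 2)
        (fun s _ => by positivity) (Finset.mem_univ s')) hB
    nlinarith [norm_nonneg (d s'), sq_nonneg (‖d s'‖ - 1)]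
  have hε2 : ε ^ 2 ≤ 1 := by nlinarith
  have hsq : 0 ≤ 2 * ε ^ 2 - ε ^ 4 := by
    nlinarith [sq_nonneg ε, mul_nonneg (sq_nonneg ε) (sub_nonneg.mpr hε2)]
  have hoff : ∀ s, s ≠ s' → ‖d s‖ ≤ Real.sqrt (2 * ε ^ 2 - ε ^ 4) := by
    intro s hs
    have hpair : ‖d s‖ ^ 2 + ‖d s'‖ ^ 2 ≤ 1 := by
      have h1 := Finset.sum_le_sum_of_subset_of_nonneg
        (f := fun t => ‖d t‖ ^ 2)
        (Finset.subset_univ ({s, s'} : Finset (Fin n → Fin 4)))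
        (fun t _ _ => by positivity)
      rw [Finset.sum_pair hs] at h1
      exact le_trans h1 hB
    have h0 : 0 ≤ 1 - ε ^ 2 := by nlinarith
    have h2 : ‖d s‖ ^ 2 ≤ 2 * ε ^ 2 - ε ^ 4 := by nlinarith [habs_ds'_lb]
    nlinarith [Real.sqrt_nonneg (2 * ε ^ 2 - ε ^ 4), norm_nonneg (d s),
      Real.sq_sqrt hsq]
  have hQexp : Q = ∑ s : Fin n → Fin 4, q s • PauliTensor n s := by
    have h1 := Pauli_complete n Q
    have h2 : ∀ s : Fin n → Fin 4, (Q * PauliTensor n s).trace = (2 : ℂ) ^ n * q s := by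
      intro s; rw [hq s]; field_simp
    rw [show (∑ s : Fin n → Fin 4, (Q * PauliTensor n s).trace • PauliTensor n s)
        = ∑ s : Fin n → Fin 4, ((2 : ℂ) ^ n * q s) • PauliTensor n s from
      Finset.sum_congr rfl fun s _ => by rw [h2]] at h1
    simp_rw [mul_smul] at h1
    rw [← Finset.smul_sum] at h1
    exact (smul_right_injective _ h2c h1).symm
  have htr : (E * Q * PauliTensor n s').trace = (2 : ℂ) ^ n * ∑ s, q s * d s := by
    conv_lhs => rw [hQexp]
    rw [Matrix.mul_sum, Matrix.sum_mul, Matrix.trace_sum]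
    rw [Finset.mul_sum]
    refine Finset.sum_congr rfl fun s _ => ?_
    rw [Matrix.mul_smul, Matrix.smul_mul, Matrix.trace_smul, smul_eq_mul]
    rw [← hd s]
    ring
  have habs : ‖(E * Q * PauliTensor n s').trace‖ / (2 : ℝ) ^ n
      = ‖∑ s, q s * d s‖ := by
    rw [htr, norm_mul, habs2n]
    field_simp
  have hsplit : (∑ s, q s * d s)
      = q s' * d s' + ∑ s ∈ Finset.univ.erase s', q s * d s :=
    (Finset.add_sum_erase _ _ (Finset.mem_univ s')).symm
  set R := ∑ s ∈ Finset.univ.erase s', q s * d s with hR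
  have hRbound : ‖R‖
      ≤ (∑ s ∈ Finset.univ.filter (fun s => s ≠ s'), ‖q s‖)
          * Real.sqrt (2 * ε ^ 2 - ε ^ 4) := by
    rw [Finset.filter_ne', Finset.sum_mul]
    calc ‖R‖ ≤ ∑ s ∈ Finset.univ.erase s', ‖q s * d s‖ :=
          norm_sum_le _ _
      _ ≤ ∑ s ∈ Finset.univ.erase s', ‖q s‖ * Real.sqrt (2 * ε ^ 2 - ε ^ 4) := by
          refine Finset.sum_le_sum fun s hs => ?_
          rw [norm_mul]
          exact mul_le_mul_of_nonneg_left (hoff s (Finset.ne_of_mem_erase hs))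
            (norm_nonneg _)
  have habs_qd : ‖q s' * d s'‖ = ‖q s'‖ * ‖d s'‖ :=
    norm_mul _ _
  have hlow : ‖q s' * d s'‖ ≤ ‖q s' * d s' + R‖ + ‖R‖ := by
    calc ‖q s' * d s'‖ = ‖(q s' * d s' + R) + (-R)‖ := by ring_nf
      _ ≤ ‖q s' * d s' + R‖ + ‖-R‖ := norm_add_le _ _
      _ = ‖q s' * d s' + R‖ + ‖R‖ := by rw [norm_neg]
  constructor
  · rw [habs, hsplit]
    have h2 : (1 - ε ^ 2) * ‖q s'‖ ≤ ‖q s' * d s'‖ := by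
      rw [habs_qd, mul_comm]
      exact mul_le_mul_of_nonneg_left habs_ds'_lb (norm_nonneg _)
    linarith [hRbound, hlow, h2]
  · rw [habs, hsplit]
    have h3 : ‖q s' * d s' + R‖ ≤ ‖q s' * d s'‖ + ‖R‖ :=
      norm_add_le _ _
    have h4 : ‖q s' * d s'‖ ≤ ‖q s'‖ := by
      rw [habs_qd]
      exact mul_le_of_le_one_right (norm_nonneg _) hds'_le
    linarith [hRbound, h3, h4]
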